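/- If X is a subshift with dense periodic points (for instance a nonwandering sofic shift or a full shift), then the topological full group ⟦X⟧ is residually finite. -/

import Mathlib

/-- The shift map `σ^n`: `(shiftZ n x) i = x (i + n)`; `shiftZ 1` is the left shift `σ`. -/
def shiftZ {A : Type*} (n : ℤ) (x : ℤ → A) : ℤ → A := fun i => x (i + n)

theorem shiftZ_shiftZ {A : Type*} (m n : ℤ) (x : ℤ → A) :
    shiftZ m (shiftZ n x) = shiftZ (n + m) x := by
  funext i; show x (i + m + n) = x (i + (n + m)); congr 1; ring

theorem shiftZ_zero {A : Type*} (x : ℤ → A) : shiftZ 0 x = x := by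
  funext i; show x (i + 0) = x i; simp

/-- Self-homeomorphisms of a space form a group under composition. -/
instance homeoGroup (X : Type*) [TopologicalSpace X] : Group (X ≃ₜ X) where
  mul f g := g.trans f
  one := Homeomorph.refl X
  inv := Homeomorph.symm
  mul_assoc f g h := Homeomorph.ext fun _ => rfl
  one_mul f := Homeomorph.ext fun _ => rfl
  mul_one f := Homeomorph.ext fun _ => rfl
  inv_mul_cancel f := Homeomorph.ext fun x => f.symm_apply_apply x

/-- The topological full group of a subshift `X`, as a subgroup of the group of
self-homeomorphisms of `X`: those homeomorphisms admitting a continuous cocycle. -/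
def tfgSubgroup {A : Type*} [TopologicalSpace A] (X : Set (ℤ → A)) :
    Subgroup (↥X ≃ₜ ↥X) where
  carrier := {f | ∃ c : ↥X → ℤ, Continuous c ∧
    ∀ x : ↥X, (f x : ℤ → A) = shiftZ (c x) (x : ℤ → A)}
  one_mem' := ⟨fun _ => 0, continuous_const, fun x => (shiftZ_zero _).symm⟩
  mul_mem' := by
    rintro f g ⟨cf, hcf, hf⟩ ⟨cg, hcg, hg⟩
    refine ⟨fun x => cf (g x) + cg x, (hcf.comp g.continuous).add hcg, fun x => ?_⟩
    show ((f (g x) : ℤ → A)) = _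
    rw [hf (g x), hg x, shiftZ_shiftZ, add_comm]
  inv_mem' := by
    rintro f ⟨cf, hcf, hf⟩
    refine ⟨fun x => -(cf (f.symm x)), (hcf.comp f.symm.continuous).neg, fun x => ?_⟩
    have h1 : (x : ℤ → A) = shiftZ (cf (f.symm x)) ((f.symm x : ↥X) : ℤ → A) := by
      have := hf (f.symm x); rwa [f.apply_symm_apply] at this
    show ((f.symm x : ↥X) : ℤ → A) = _
    rw [h1, shiftZ_shiftZ]
    simp [shiftZ_zero]

lemma periodic_mul {A : Type*} (p : ℤ) (x : ℤ → A) (h : shiftZ p x = x) :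
    ∀ k : ℤ, ∀ i, x (i + p * k) = x i := by
  have hstep : ∀ j : ℤ, x (j + p) = x j := fun j => congrFun h j
  intro k
  induction k using Int.induction_on with
  | zero => simp
  | succ k ih =>
    intro i
    have h1 : i + p * ((k : ℤ) + 1) = (i + p * k) + p := by ring
    rw [h1, hstep (i + p * k), ih]
  | pred k ih =>
    intro i
    have := ih i
    have h1 : i + p * (-(k : ℤ)) = (i + p * (-(k:ℤ) - 1)) + p := by ring
    rw [h1, hstep (i + p * (-(k:ℤ)-1))] at this
    rw [← this]

/-- If `X` is a subshift with dense periodic points, then its topological full group is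
residually finite. -/
theorem tfg_residually_finite {A : Type*} [Fintype A] [TopologicalSpace A]
    [DiscreteTopology A] (X : Set (ℤ → A)) (hclosed : IsClosed X)
    (hinv : ∀ x ∈ X, ∀ n : ℤ, shiftZ n x ∈ X)
    (hper : Dense {x : ↥X | ∃ p : ℕ, 1 ≤ p ∧ shiftZ (p : ℤ) (x : ℤ → A) = (x : ℤ → A)}) :
    ∀ f : ↥(tfgSubgroup X), f ≠ 1 →
      ∃ (Q : Type) (_ : Group Q) (_ : Finite Q) (φ : ↥(tfgSubgroup X) →* Q), φ f ≠ 1 := by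
  intro f hf
  -- find a point moved by f
  have hx : ∃ x : ↥X, (f : ↥X ≃ₜ ↥X) x ≠ x := by
    by_contra h
    push_neg at h
    exact hf (Subtype.ext (Homeomorph.ext h))
  obtain ⟨x₀, hx₀⟩ := hx
  have hopen : IsOpen {x : ↥X | (f : ↥X ≃ₜ ↥X) x ≠ x} :=
    isOpen_ne_fun (f : ↥X ≃ₜ ↥X).continuous continuous_id
  obtain ⟨y, hy_per, hy_ne⟩ := hper.exists_mem_open hopen ⟨x₀, hx₀⟩
  obtain ⟨p, hp1, hpy⟩ := hy_per
  -- the finite set of p-periodic points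
  set S : Set ↥X := {x : ↥X | shiftZ (p : ℤ) (x : ℤ → A) = (x : ℤ → A)} with hS
  have key : ∀ x : ↥S, ∀ i : ℤ, (x.1 : ℤ → A) i = (x.1 : ℤ → A) (i % (p : ℤ)) := by
    intro x i
    have := periodic_mul (p : ℤ) (x.1 : ℤ → A) x.2 (i / (p : ℤ)) (i % (p : ℤ))
    rw [Int.emod_add_mul_ediv i (p : ℤ)] at this
    exact this
  haveI hfinS : Finite ↥S := by
    have hpi : (0 : ℤ) < (p : ℤ) := by exact_mod_cast hp1
    apply Finite.of_injective (fun x : ↥S => fun i : Fin p => (x.1 : ℤ → A) (i : ℤ))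
    intro a b hab
    apply Subtype.ext; apply Subtype.ext; funext i
    have hlt : (i % (p : ℤ)).toNat < p := by
      have h1 : i % (p : ℤ) < (p : ℤ) := Int.emod_lt_of_pos i hpi
      omega
    have hnn : (0 : ℤ) ≤ i % (p : ℤ) := Int.emod_nonneg i (by omega)
    have hcast : (((i % (p : ℤ)).toNat : ℤ)) = i % (p : ℤ) := Int.toNat_of_nonneg hnn
    have := congrFun hab ⟨(i % (p : ℤ)).toNat, hlt⟩
    simp only at this
    rw [key a i, key b i, ← hcast]
    exact_mod_cast this
  -- elements of the full group preserve S
  have pres : ∀ g : ↥(tfgSubgroup X), ∀ x : ↥X, x ∈ S → (g : ↥X ≃ₜ ↥X) x ∈ S := by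
    intro g x hx
    obtain ⟨c, -, hc⟩ := g.2
    show shiftZ (p : ℤ) (((g : ↥X ≃ₜ ↥X) x : ↥X) : ℤ → A) = _
    rw [hc x, shiftZ_shiftZ, add_comm (c x) (p : ℤ), ← shiftZ_shiftZ, hx]
  have hiff : ∀ g : ↥(tfgSubgroup X), ∀ x : ↥X, x ∈ S ↔ (g : ↥X ≃ₜ ↥X) x ∈ S := by
    intro g x
    constructor
    · exact pres g x
    · intro h
      have := pres g⁻¹ ((g : ↥X ≃ₜ ↥X) x) h
      have hco : ((g⁻¹ : ↥(tfgSubgroup X)) : ↥X ≃ₜ ↥X) ((g : ↥X ≃ₜ ↥X) x) = x :=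
        (g : ↥X ≃ₜ ↥X).symm_apply_apply x
      rwa [hco] at this
  -- the homomorphism to permutations of S
  let φ : ↥(tfgSubgroup X) →* Equiv.Perm ↥S :=
    { toFun := fun g => Equiv.Perm.subtypePerm (g : ↥X ≃ₜ ↥X).toEquiv (fun x => (hiff g x).symm)
      map_one' := by ext x; rfl
      map_mul' := by intro a b; ext x; rfl }
  haveI := Fintype.ofFinite ↥S
  let e : ↥S ≃ Fin (Fintype.card ↥S) := Fintype.equivFin ↥S
  let ψ : Equiv.Perm ↥S →* Equiv.Perm (Fin (Fintype.card ↥S)) :=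
    { toFun := fun g => (e.symm.trans (g.trans e))
      map_one' := by ext i; simp
      map_mul' := by intro a b; ext i; simp }
  refine ⟨Equiv.Perm (Fin (Fintype.card ↥S)), inferInstance, inferInstance, ψ.comp φ, ?_⟩
  intro h1
  have h2 : (ψ.comp φ) f (e ⟨y, hpy⟩) = e ⟨y, hpy⟩ := by rw [h1]; rfl
  have h3 : (φ f) ⟨y, hpy⟩ = ⟨y, hpy⟩ := e.injective (by simpa [ψ] using h2)
  exact hy_ne (congrArg Subtype.val h3)
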